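/- Let β be a stable exponent sequence, let (a_{n,k}) be a Köthe matrix, and let θ : ℕ → ℂ satisfy θ ∈ Λ_1(β). Assume there exists m ∈ ℕ such that for every positive integer k there is C > 0 with e^{β_n/k} ≤ C · a_{n,m} for all n ∈ ℕ. Then there exists m ∈ ℕ such that for every positive integer k there is C' > 0 with ∑_{j=0}^∞ |θ_{j+n}| · e^{-β_j/k} ≤ C' · a_{n,m} for all n ∈ ℕ (the compactness condition for the Hankel operator H_θ : K(a_{n,k}) → Λ_1(β): the index m is independent of k). -/
import Mathlib


/-- If `β` is a stable exponent sequence, `θ ∈ Λ_1(β)`, and there exists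
`m` such that for every positive integer `k` there is `C > 0` with
`e^{β_n/k} ≤ C a_{n,m}`, then the Hankel operator `H_θ : K(a) → Λ_1(β)` satisfies the
compactness condition (the index `m` is independent of `k`). -/
theorem hankel_to_finite_type_compact
    (a : ℕ → ℕ → ℝ) (β : ℕ → ℝ) (θ : ℕ → ℂ)
    (ha_nonneg : ∀ n k, 0 ≤ a n k) (ha_mono : ∀ n k, a n k ≤ a n (k + 1))
    (ha_pos : ∀ n, ∃ k, 0 < a n k)
    (hβ_nonneg : ∀ n, 0 ≤ β n) (hβ_mono : Monotone β)
    (hβ_tendsto : Filter.Tendsto β Filter.atTop Filter.atTop)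
    (hβ_stable : ∃ M : ℝ, 0 < M ∧ ∀ n : ℕ, β (2 * n) ≤ M * β n)
    (hθ : ∀ k : ℕ, 0 < k → Summable fun n : ℕ => ‖θ n‖ * Real.exp (-β n / (k : ℝ)))
    (hcond : ∃ m : ℕ, ∀ k : ℕ, 0 < k → ∃ C : ℝ, 0 < C ∧
      ∀ n : ℕ, Real.exp (β n / (k : ℝ)) ≤ C * a n m) :
    ∃ m : ℕ, ∀ k : ℕ, 0 < k → ∃ C' : ℝ, 0 < C' ∧
      ∀ n : ℕ, (∑' j : ℕ, ‖θ (j + n)‖ * Real.exp (-β j / (k : ℝ))) ≤ C' * a n m := by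
  obtain ⟨M, hMpos, hMst⟩ := hβ_stable
  set M' : ℝ := max M 1 with hM'def
  have hM'1 : (1 : ℝ) ≤ M' := le_max_right _ _
  have hM'st : ∀ n : ℕ, β (2 * n) ≤ M' * β n := fun n =>
    (hMst n).trans (mul_le_mul_of_nonneg_right (le_max_left _ _) (hβ_nonneg n))
  -- key: β (j+n) ≤ M' * (β j + β n)
  have hkey : ∀ j n : ℕ, β (j + n) ≤ M' * (β j + β n) := by
    intro j n
    rcases le_total j n with h | h
    · have h1 : β (j + n) ≤ β (2 * n) := hβ_mono (by omega)
      have h2 : M' * β n ≤ M' * (β j + β n) := by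
        apply mul_le_mul_of_nonneg_left _ (by linarith)
        linarith [hβ_nonneg j]
      linarith [hM'st n]
    · have h1 : β (j + n) ≤ β (2 * j) := hβ_mono (by omega)
      have h2 : M' * β j ≤ M' * (β j + β n) := by
        apply mul_le_mul_of_nonneg_left _ (by linarith)
        linarith [hβ_nonneg n]
      linarith [hM'st j]
  obtain ⟨m, hm⟩ := hcond
  refine ⟨m, fun k hk => ?_⟩
  set k' : ℕ := ⌈M'⌉₊ * k with hk'def
  have hk'pos : 0 < k' := Nat.mul_pos (Nat.ceil_pos.2 (by linarith)) hk
  have hk'ge : M' * (k : ℝ) ≤ (k' : ℝ) := by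
    rw [hk'def]
    push_cast
    exact mul_le_mul_of_nonneg_right (Nat.le_ceil M') (by positivity)
  have hSsum : Summable fun i : ℕ => ‖θ i‖ * Real.exp (-β i / (k' : ℝ)) := hθ k' hk'pos
  set S : ℝ := ∑' i : ℕ, ‖θ i‖ * Real.exp (-β i / (k' : ℝ)) with hSdef
  have hSnn : 0 ≤ S := tsum_nonneg fun i => by positivity
  obtain ⟨C, hCpos, hCa⟩ := hm k hk
  refine ⟨C * (S + 1), by positivity, fun n => ?_⟩
  have hkR : (0 : ℝ) < (k : ℝ) := by exact_mod_cast hk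
  have hk'R : (0 : ℝ) < (k' : ℝ) := by exact_mod_cast hk'pos
  -- pointwise bound
  have hpt : ∀ j : ℕ, ‖θ (j + n)‖ * Real.exp (-β j / (k : ℝ)) ≤
      Real.exp (β n / (k : ℝ)) * (‖θ (j + n)‖ * Real.exp (-β (j + n) / (k' : ℝ))) := by
    intro j
    have hexp : Real.exp (-β j / (k : ℝ)) ≤
        Real.exp (β n / (k : ℝ)) * Real.exp (-β (j + n) / (k' : ℝ)) := by
      rw [← Real.exp_add]
      apply Real.exp_le_exp.2
      rw [div_add_div _ _ (ne_of_gt hkR) (ne_of_gt hk'R), div_le_div_iff₀ (by positivity) (by positivity)]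
      have h1 : β (j + n) * (k : ℝ) ≤ (β j + β n) * (M' * (k : ℝ)) := by
        have := hkey j n
        have := hβ_nonneg j; have := hβ_nonneg n
        nlinarith
      have h2 : (β j + β n) * (M' * (k : ℝ)) ≤ (β j + β n) * (k' : ℝ) := by
        apply mul_le_mul_of_nonneg_left hk'ge
        linarith [hβ_nonneg j, hβ_nonneg n]
      nlinarith [mul_le_mul_of_nonneg_right (h1.trans h2) hkR.le]
    calc ‖θ (j + n)‖ * Real.exp (-β j / (k : ℝ))
        ≤ ‖θ (j + n)‖ * (Real.exp (β n / (k : ℝ)) * Real.exp (-β (j + n) / (k' : ℝ))) :=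
          mul_le_mul_of_nonneg_left hexp (norm_nonneg _)
      _ = Real.exp (β n / (k : ℝ)) * (‖θ (j + n)‖ * Real.exp (-β (j + n) / (k' : ℝ))) := by ring
  have hshift : Summable fun j : ℕ => ‖θ (j + n)‖ * Real.exp (-β (j + n) / (k' : ℝ)) :=
    hSsum.comp_injective (add_left_injective n)
  have hg : Summable fun j : ℕ =>
      Real.exp (β n / (k : ℝ)) * (‖θ (j + n)‖ * Real.exp (-β (j + n) / (k' : ℝ))) :=
    hshift.mul_left _
  have hf : Summable fun j : ℕ => ‖θ (j + n)‖ * Real.exp (-β j / (k : ℝ)) :=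
    Summable.of_nonneg_of_le (fun j => by positivity) hpt hg
  have hshift_le : (∑' j : ℕ, ‖θ (j + n)‖ * Real.exp (-β (j + n) / (k' : ℝ))) ≤ S := by
    rw [hSdef]
    exact Summable.tsum_le_tsum_of_inj (· + n) (add_left_injective n)
      (fun i _ => by positivity) (fun j => le_refl _) hshift hSsum
  have hstep : (∑' j : ℕ, ‖θ (j + n)‖ * Real.exp (-β j / (k : ℝ))) ≤
      Real.exp (β n / (k : ℝ)) * S := by
    calc (∑' j : ℕ, ‖θ (j + n)‖ * Real.exp (-β j / (k : ℝ)))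
        ≤ ∑' j : ℕ, Real.exp (β n / (k : ℝ)) *
            (‖θ (j + n)‖ * Real.exp (-β (j + n) / (k' : ℝ))) := Summable.tsum_le_tsum hpt hf hg
      _ = Real.exp (β n / (k : ℝ)) *
            ∑' j : ℕ, ‖θ (j + n)‖ * Real.exp (-β (j + n) / (k' : ℝ)) := tsum_mul_left
      _ ≤ Real.exp (β n / (k : ℝ)) * S :=
            mul_le_mul_of_nonneg_left hshift_le (Real.exp_nonneg _)
  have hanm : 0 ≤ a n m := ha_nonneg n m
  calc (∑' j : ℕ, ‖θ (j + n)‖ * Real.exp (-β j / (k : ℝ)))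
      ≤ Real.exp (β n / (k : ℝ)) * S := hstep
    _ ≤ (C * a n m) * S := mul_le_mul_of_nonneg_right (hCa n) hSnn
    _ ≤ C * (S + 1) * a n m := by nlinarith
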